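/- Suppose f : [a,b] × [c,d] → ℝ is convex on the co-ordinates. Then (1/((b-a)(d-c))) ∫_a^b ∫_c^d f(x,y) dy dx ≤ (1/4)[(1/(b-a)) ∫_a^b f(x,c) dx + (1/(b-a)) ∫_a^b f(x,d) dx + (1/(d-c)) ∫_c^d f(a,y) dy + (1/(d-c)) ∫_c^d f(b,y) dy] ≤ (f(a,c)+f(a,d)+f(b,c)+f(b,d))/4. -/

import Mathlib

open MeasureTheory

lemma hh_right {a b : ℝ} (hab : a < b) {f : ℝ → ℝ} (hf : ConvexOn ℝ (Set.Icc a b) f)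
    (hint : IntervalIntegrable f volume a b) :
    ∫ x in a..b, f x ≤ (b - a) * (f a + f b) / 2 := by
  have hba : (0:ℝ) < b - a := by linarith
  set g : ℝ → ℝ := fun x => (b * f a - a * f b) / (b - a) + (f b - f a) / (b - a) * x with hg
  have hgc : Continuous g := by fun_prop
  have hmono : ∀ x ∈ Set.Icc a b, f x ≤ g x := by
    intro x hx
    obtain ⟨hax, hxb⟩ := hx
    have ht : 0 ≤ (b - x) / (b - a) := div_nonneg (by linarith) hba.le
    have hs : 0 ≤ (x - a) / (b - a) := div_nonneg (by linarith) hba.le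
    have hts : (b - x) / (b - a) + (x - a) / (b - a) = 1 := by field_simp; ring
    have := hf.2 (Set.left_mem_Icc.mpr hab.le) (Set.right_mem_Icc.mpr hab.le) ht hs hts
    simp only [smul_eq_mul] at this
    have hx' : (b - x) / (b - a) * a + (x - a) / (b - a) * b = x := by field_simp; ring
    rw [hx'] at this
    calc f x ≤ (b - x) / (b - a) * f a + (x - a) / (b - a) * f b := this
      _ = g x := by rw [hg]; field_simp; ring
  have h1 : ∫ x in a..b, f x ≤ ∫ x in a..b, g x :=
    intervalIntegral.integral_mono_on hab.le hint (hgc.intervalIntegrable a b) hmono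
  have h2 : ∫ x in a..b, g x = (b - a) * (f a + f b) / 2 := by
    rw [hg]
    simp only []
    rw [intervalIntegral.integral_add (intervalIntegrable_const)
      ((Continuous.intervalIntegrable (by continuity) a b : IntervalIntegrable (fun x => (f b - f a) / (b - a) * x) volume a b)),
      intervalIntegral.integral_const, intervalIntegral.integral_const_mul,
      integral_id]
    field_simp [hba.ne']
    linear_combination 2 * (b - a) * (b * f a - a * f b) * mul_inv_cancel₀ hba.ne'
  linarith

def CoordConvexOn (a b c d : ℝ) (f : ℝ → ℝ → ℝ) : Prop :=
  (∀ y ∈ Set.Icc c d, ConvexOn ℝ (Set.Icc a b) (fun x => f x y)) ∧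
  (∀ x ∈ Set.Icc a b, ConvexOn ℝ (Set.Icc c d) (fun y => f x y))

theorem stmt6 (a b c d : ℝ) (hab : a < b) (hcd : c < d) (f : ℝ → ℝ → ℝ)
    (hf : CoordConvexOn a b c d f)
    (hint : IntegrableOn (fun p : ℝ × ℝ => f p.1 p.2) (Set.Icc a b ×ˢ Set.Icc c d))
    (hic : IntervalIntegrable (fun x => f x c) volume a b)
    (hid : IntervalIntegrable (fun x => f x d) volume a b)
    (hia : IntervalIntegrable (fun y => f a y) volume c d)
    (hib : IntervalIntegrable (fun y => f b y) volume c d) :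
    (1 / ((b - a) * (d - c))) * (∫ x in a..b, ∫ y in c..d, f x y) ≤
        (1 / 4) * ((1 / (b - a)) * (∫ x in a..b, f x c) +
          (1 / (b - a)) * (∫ x in a..b, f x d) +
          (1 / (d - c)) * (∫ y in c..d, f a y) +
          (1 / (d - c)) * ∫ y in c..d, f b y) ∧
      (1 / 4) * ((1 / (b - a)) * (∫ x in a..b, f x c) +
          (1 / (b - a)) * (∫ x in a..b, f x d) +
          (1 / (d - c)) * (∫ y in c..d, f a y) +
          (1 / (d - c)) * ∫ y in c..d, f b y) ≤
        (f a c + f a d + f b c + f b d) / 4 := by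
  have hba : (0:ℝ) < b - a := by linarith
  have hdc : (0:ℝ) < d - c := by linarith
  have h0 : IntegrableOn (fun p : ℝ × ℝ => f p.1 p.2) (Set.Ioc a b ×ˢ Set.Ioc c d) :=
    hint.mono_set (Set.prod_mono Set.Ioc_subset_Icc_self Set.Ioc_subset_Icc_self)
  have hprod : Integrable (fun p : ℝ × ℝ => f p.1 p.2)
      ((volume.restrict (Set.Ioc a b)).prod (volume.restrict (Set.Ioc c d))) := by
    rw [Measure.prod_restrict]
    exact h0
  have hic' : Integrable (fun x => f x c) (volume.restrict (Set.Ioc a b)) :=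
    (intervalIntegrable_iff_integrableOn_Ioc_of_le hab.le).mp hic
  have hid' : Integrable (fun x => f x d) (volume.restrict (Set.Ioc a b)) :=
    (intervalIntegrable_iff_integrableOn_Ioc_of_le hab.le).mp hid
  have hia' : Integrable (fun y => f a y) (volume.restrict (Set.Ioc c d)) :=
    (intervalIntegrable_iff_integrableOn_Ioc_of_le hcd.le).mp hia
  have hib' : Integrable (fun y => f b y) (volume.restrict (Set.Ioc c d)) :=
    (intervalIntegrable_iff_integrableOn_Ioc_of_le hcd.le).mp hib
  have hF : Integrable (fun x => ∫ y in Set.Ioc c d, f x y) (volume.restrict (Set.Ioc a b)) :=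
    hprod.integral_prod_left
  have hG : Integrable (fun y => ∫ x in Set.Ioc a b, f x y) (volume.restrict (Set.Ioc c d)) :=
    hprod.integral_prod_right
  have hbound1 : ∀ᵐ x ∂(volume.restrict (Set.Ioc a b)),
      (∫ y in Set.Ioc c d, f x y) ≤ (d - c) * (f x c + f x d) / 2 := by
    filter_upwards [hprod.prod_right_ae, ae_restrict_mem measurableSet_Ioc] with x hx hx2
    have hconv := hf.2 x ⟨hx2.1.le, hx2.2⟩
    have hii : IntervalIntegrable (fun y => f x y) volume c d :=
      (intervalIntegrable_iff_integrableOn_Ioc_of_le hcd.le).mpr hx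
    have := hh_right hcd hconv hii
    rwa [intervalIntegral.integral_of_le hcd.le] at this
  have hR1 : Integrable (fun x => (d - c) * (f x c + f x d) / 2)
      (volume.restrict (Set.Ioc a b)) := ((hic'.add hid').const_mul _).div_const _
  have h1 : (∫ x in Set.Ioc a b, (∫ y in Set.Ioc c d, f x y)) ≤
      (d - c) * ((∫ x in Set.Ioc a b, f x c) + ∫ x in Set.Ioc a b, f x d) / 2 := by
    refine le_trans (integral_mono_ae hF hR1 hbound1) (le_of_eq ?_)
    rw [integral_div, integral_const_mul, integral_add hic' hid']
  have hbound2 : ∀ᵐ y ∂(volume.restrict (Set.Ioc c d)),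
      (∫ x in Set.Ioc a b, f x y) ≤ (b - a) * (f a y + f b y) / 2 := by
    filter_upwards [hprod.swap.prod_right_ae, ae_restrict_mem measurableSet_Ioc] with y hy hy2
    have hconv := hf.1 y ⟨hy2.1.le, hy2.2⟩
    have hii : IntervalIntegrable (fun x => f x y) volume a b :=
      (intervalIntegrable_iff_integrableOn_Ioc_of_le hab.le).mpr hy
    have := hh_right hab hconv hii
    rwa [intervalIntegral.integral_of_le hab.le] at this
  have hR2 : Integrable (fun y => (b - a) * (f a y + f b y) / 2)
      (volume.restrict (Set.Ioc c d)) := ((hia'.add hib').const_mul _).div_const _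
  have h2 : (∫ y in Set.Ioc c d, (∫ x in Set.Ioc a b, f x y)) ≤
      (b - a) * ((∫ y in Set.Ioc c d, f a y) + ∫ y in Set.Ioc c d, f b y) / 2 := by
    refine le_trans (integral_mono_ae hG hR2 hbound2) (le_of_eq ?_)
    rw [integral_div, integral_const_mul, integral_add hia' hib']
  have hswap : (∫ x in Set.Ioc a b, (∫ y in Set.Ioc c d, f x y)) =
      ∫ y in Set.Ioc c d, (∫ x in Set.Ioc a b, f x y) :=
    integral_integral_swap hprod
  have e1 : (∫ x in a..b, f x c) ≤ (b - a) * (f a c + f b c) / 2 :=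
    hh_right hab (hf.1 c ⟨le_refl c, hcd.le⟩) hic
  have e2 : (∫ x in a..b, f x d) ≤ (b - a) * (f a d + f b d) / 2 :=
    hh_right hab (hf.1 d ⟨hcd.le, le_refl d⟩) hid
  have e3 : (∫ y in c..d, f a y) ≤ (d - c) * (f a c + f a d) / 2 :=
    hh_right hcd (hf.2 a ⟨le_refl a, hab.le⟩) hia
  have e4 : (∫ y in c..d, f b y) ≤ (d - c) * (f b c + f b d) / 2 :=
    hh_right hcd (hf.2 b ⟨hab.le, le_refl b⟩) hib
  simp only [intervalIntegral.integral_of_le hab.le, intervalIntegral.integral_of_le hcd.le]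
    at e1 e2 e3 e4 ⊢
  set I := ∫ x in Set.Ioc a b, (∫ y in Set.Ioc c d, f x y) with hI
  set Ic := ∫ x in Set.Ioc a b, f x c with hIc
  set Id := ∫ x in Set.Ioc a b, f x d with hId
  set Ia := ∫ y in Set.Ioc c d, f a y with hIa
  set Ib := ∫ y in Set.Ioc c d, f b y with hIb
  rw [← hswap] at h2
  constructor
  · have key : I ≤ ((d - c) * (Ic + Id) / 2 + (b - a) * (Ia + Ib) / 2) / 2 := by linarith
    calc (1 / ((b - a) * (d - c))) * I
        ≤ (1 / ((b - a) * (d - c))) * (((d - c) * (Ic + Id) / 2 + (b - a) * (Ia + Ib) / 2) / 2) :=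
          mul_le_mul_of_nonneg_left key (by positivity)
      _ = (1 / 4) * ((1 / (b - a)) * Ic + (1 / (b - a)) * Id +
          (1 / (d - c)) * Ia + (1 / (d - c)) * Ib) := by
          field_simp
          ring
  · have f1 : (1 / (b - a)) * Ic ≤ (f a c + f b c) / 2 := by
      calc (1 / (b - a)) * Ic ≤ (1 / (b - a)) * ((b - a) * (f a c + f b c) / 2) :=
            mul_le_mul_of_nonneg_left e1 (le_of_lt (one_div_pos.mpr hba))
        _ = (f a c + f b c) / 2 := by field_simp
    have f2 : (1 / (b - a)) * Id ≤ (f a d + f b d) / 2 := by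
      calc (1 / (b - a)) * Id ≤ (1 / (b - a)) * ((b - a) * (f a d + f b d) / 2) :=
            mul_le_mul_of_nonneg_left e2 (le_of_lt (one_div_pos.mpr hba))
        _ = (f a d + f b d) / 2 := by field_simp
    have f3 : (1 / (d - c)) * Ia ≤ (f a c + f a d) / 2 := by
      calc (1 / (d - c)) * Ia ≤ (1 / (d - c)) * ((d - c) * (f a c + f a d) / 2) :=
            mul_le_mul_of_nonneg_left e3 (le_of_lt (one_div_pos.mpr hdc))
        _ = (f a c + f a d) / 2 := by field_simp
    have f4 : (1 / (d - c)) * Ib ≤ (f b c + f b d) / 2 := by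
      calc (1 / (d - c)) * Ib ≤ (1 / (d - c)) * ((d - c) * (f b c + f b d) / 2) :=
            mul_le_mul_of_nonneg_left e4 (le_of_lt (one_div_pos.mpr hdc))
        _ = (f b c + f b d) / 2 := by field_simp
    linarith
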